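/- Kernel estimate: let q : [-b,b] → ℂ be continuous with c = max|q|, and let H : {|u|+|v| ≤ b} → ℂ be the solution of the Goursat problem ∂²H/∂u∂v = q(u+v) H with H(u,0) = h/2 + (1/2)∫₀ᵘ q(s) ds and H(0,v) = h/2. Then |H(u,v)| ≤ (|h|/2) ∑_{k≥0} c^k |uv|^k/(k!)² + (1/2) ∑_{k≥0} c^{k+1} |u|^{k+1} |v|^k / ((k+1)! k!), i.e. |H(u,v)| ≤ (|h|/2) I₀(2√(c|uv|)) + (√(c)|u|/(2√|uv|)) I₁(2√(c|uv|)) when uv ≠ 0, where I₀, I₁ are modified Bessel functions of the first kind. -/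

import Mathlib

open MeasureTheory intervalIntegral Finset Filter Topology

private lemma fact_ne (k : ℕ) : ((k.factorial : ℝ)) ≠ 0 :=
  Nat.cast_ne_zero.mpr k.factorial_ne_zero

private lemma abs_mem_le {x u : ℝ} (hx : x ∈ Set.uIcc 0 u) : |x| ≤ |u| := by
  have h1 := le_abs_self u; have h2 := neg_abs_le u
  rcases Set.mem_uIcc.mp hx with ⟨ha, hb⟩ | ⟨ha, hb⟩ <;> rw [abs_le] <;>
    exact ⟨by linarith, by linarith⟩

/-- Bound `|∫ x in 0..v, f| ≤ ∫ t in 0..|v|, g` given pointwise bounds on both sides. -/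
private lemma norm_iint_le {f : ℝ → ℂ} {g : ℝ → ℝ} {v : ℝ}
    (hf : IntervalIntegrable f volume 0 v)
    (hg : IntervalIntegrable g volume 0 |v|)
    (hbd : ∀ t ∈ Set.Icc (0:ℝ) |v|, ‖f t‖ ≤ g t ∧ ‖f (-t)‖ ≤ g t) :
    ‖∫ x in (0:ℝ)..v, f x‖ ≤ ∫ t in (0:ℝ)..|v|, g t := by
  rcases le_or_gt 0 v with hv | hv
  · have habs : |v| = v := abs_of_nonneg hv
    rw [habs] at hg hbd ⊢
    refine (intervalIntegral.norm_integral_le_integral_norm hv).trans ?_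
    exact intervalIntegral.integral_mono_on hv hf.norm hg fun x hx => (hbd x hx).1
  · have hv' : (0:ℝ) ≤ -v := by linarith
    have habs : |v| = -v := abs_of_neg hv
    have h1 : (∫ x in (0:ℝ)..v, f x) = -∫ t in (0:ℝ)..(-v), f (-t) := by
      rw [intervalIntegral.integral_comp_neg]
      simp [intervalIntegral.integral_symm v 0]
    have hf' : IntervalIntegrable (fun t => f (-t)) volume 0 (-v) := by
      simpa using (IntervalIntegrable.iff_comp_neg (f := f) (a := 0) (b := v) (by simp)).mp hf
    rw [h1, norm_neg, habs]
    refine (intervalIntegral.norm_integral_le_integral_norm hv').trans ?_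
    refine intervalIntegral.integral_mono_on hv' hf'.norm (by rwa [habs] at hg) fun t ht => ?_
    exact (hbd t (by rwa [habs])).2

/-- The `n`-th comparison bound in the successive-approximation estimate. -/
noncomputable def BB (h M c : ℝ) (n : ℕ) (s t : ℝ) : ℝ :=
  (∑ k ∈ Finset.range n, h / 2 * c ^ k * s ^ k / ((k.factorial : ℝ) * k.factorial) * t ^ k)
  + (∑ k ∈ Finset.range n, 1 / 2 * c ^ (k + 1) * s ^ (k + 1) /
      (((k + 1).factorial : ℝ) * k.factorial) * t ^ k)
  + M * c ^ n * s ^ n / ((n.factorial : ℝ) * n.factorial) * t ^ n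

private lemma BB_cont_t (h M c : ℝ) (n : ℕ) (s : ℝ) : Continuous fun t => BB h M c n s t := by
  unfold BB
  exact ((continuous_finset_sum _ fun k _ => continuous_const.mul (continuous_pow k)).add
    (continuous_finset_sum _ fun k _ => continuous_const.mul (continuous_pow k))).add
    (continuous_const.mul (continuous_pow n))

private lemma int_mono (C : ℝ) (k : ℕ) (d : ℝ) :
    (∫ t in (0:ℝ)..d, C * t ^ k) = C * d ^ (k + 1) / (k + 1) := by
  rw [intervalIntegral.integral_const_mul, integral_pow]
  have : (0:ℝ) ^ (k + 1) = 0 := zero_pow (Nat.succ_ne_zero k)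
  rw [this]; ring

private lemma ii_mono (C : ℝ) (k : ℕ) (d : ℝ) :
    IntervalIntegrable (fun t : ℝ => C * t ^ k) volume 0 d :=
  (continuous_const.mul (continuous_pow k)).intervalIntegrable 0 d

private lemma BB_integral_t (h M c : ℝ) (n : ℕ) (s d : ℝ) :
    (∫ t in (0:ℝ)..d, BB h M c n s t) =
    (∑ k ∈ Finset.range n,
        h / 2 * c ^ k * d ^ (k + 1) / (((k + 1).factorial : ℝ) * k.factorial) * s ^ k)
    + (∑ k ∈ Finset.range n, 1 / 2 * c ^ (k + 1) * d ^ (k + 1) /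
        (((k + 1).factorial : ℝ) * (k + 1).factorial) * s ^ (k + 1))
    + M * c ^ n * d ^ (n + 1) / (((n + 1).factorial : ℝ) * n.factorial) * s ^ n := by
  unfold BB
  erw [intervalIntegral.integral_add (((continuous_finset_sum _ fun k _ =>
        continuous_const.mul (continuous_pow k)).add (continuous_finset_sum _ fun k _ =>
        continuous_const.mul (continuous_pow k))).intervalIntegrable 0 d) (ii_mono _ n d),
      intervalIntegral.integral_add ((continuous_finset_sum _ fun k _ =>
        continuous_const.mul (continuous_pow k)).intervalIntegrable 0 d)
        ((continuous_finset_sum _ fun k _ =>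
        continuous_const.mul (continuous_pow k)).intervalIntegrable 0 d),
      intervalIntegral.integral_finset_sum (fun k _ => ii_mono _ k d),
      intervalIntegral.integral_finset_sum (fun k _ => ii_mono _ k d)]
  congr 1
  · congr 1
    · refine Finset.sum_congr rfl fun k _ => ?_
      rw [int_mono, Nat.factorial_succ]
      have hk := fact_ne k
      have hk1 : ((k:ℝ) + 1) ≠ 0 := by positivity
      push_cast
      field_simp
    · refine Finset.sum_congr rfl fun k _ => ?_
      rw [int_mono, Nat.factorial_succ k]
      have hk := fact_ne k
      have hk2 : ((k:ℝ) + 1) ≠ 0 := by positivity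
      push_cast
      field_simp
  · rw [int_mono, Nat.factorial_succ]
    have hk := fact_ne n
    have hk1 : ((n:ℝ) + 1) ≠ 0 := by positivity
    push_cast
    field_simp

private lemma BB_rec (h M c : ℝ) (n : ℕ) (a d : ℝ) :
    h / 2 + c * a / 2 + c * (∫ s in (0:ℝ)..a, ∫ t in (0:ℝ)..d, BB h M c n s t)
      = BB h M c (n + 1) a d := by
  simp_rw [BB_integral_t]
  erw [intervalIntegral.integral_add (((continuous_finset_sum _ fun k _ =>
        continuous_const.mul (continuous_pow k)).add (continuous_finset_sum _ fun k _ =>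
        continuous_const.mul (continuous_pow (k+1)))).intervalIntegrable 0 a) (ii_mono _ n a),
      intervalIntegral.integral_add ((continuous_finset_sum _ fun k _ =>
        continuous_const.mul (continuous_pow k)).intervalIntegrable 0 a)
        ((continuous_finset_sum _ fun k _ =>
        continuous_const.mul (continuous_pow (k+1))).intervalIntegrable 0 a),
      intervalIntegral.integral_finset_sum (fun k _ => ii_mono _ k a),
      intervalIntegral.integral_finset_sum (fun k _ => ii_mono _ (k+1) a)]
  unfold BB
  rw [Finset.sum_range_succ', Finset.sum_range_succ']
  simp_rw [int_mono]
  rw [mul_add, mul_add, Finset.mul_sum, Finset.mul_sum]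
  have e1 : ∀ k ∈ Finset.range n,
      c * (h / 2 * c ^ k * d ^ (k + 1) / (((k + 1).factorial : ℝ) * k.factorial) * a ^ (k + 1)
        / (k + 1))
      = h / 2 * c ^ (k + 1) * a ^ (k + 1) /
          (((k + 1).factorial : ℝ) * (k + 1).factorial) * d ^ (k + 1) := by
    intro k _
    have hk := fact_ne k
    have hk1 := fact_ne (k + 1)
    have hk2 : ((k:ℝ) + 1) ≠ 0 := by positivity
    rw [Nat.factorial_succ k]
    push_cast
    field_simp
    ring
  have e2 : ∀ k ∈ Finset.range n,
      c * (1 / 2 * c ^ (k + 1) * d ^ (k + 1) /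
          (((k + 1).factorial : ℝ) * (k + 1).factorial) * a ^ (k + 1 + 1) / (((k + 1 : ℕ) : ℝ) + 1))
      = 1 / 2 * c ^ (k + 1 + 1) * a ^ (k + 1 + 1) /
          (((k + 1 + 1).factorial : ℝ) * (k + 1).factorial) * d ^ (k + 1) := by
    intro k _
    have hk1 := fact_ne (k + 1)
    have hk2 := fact_ne (k + 2)
    have hk3 : ((k:ℝ) + 2) ≠ 0 := by positivity
    rw [Nat.factorial_succ (k + 1)]
    push_cast
    field_simp
    ring
  rw [Finset.sum_congr rfl e1, Finset.sum_congr rfl e2]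
  have e3 : c * (M * c ^ n * d ^ (n + 1) / (((n + 1).factorial : ℝ) * n.factorial) * a ^ (n + 1)
        / (n + 1))
      = M * c ^ (n + 1) * a ^ (n + 1) / (((n + 1).factorial : ℝ) * (n + 1).factorial)
        * d ^ (n + 1) := by
    have hk := fact_ne n
    have hk1 := fact_ne (n + 1)
    have hk2 : ((n:ℝ) + 1) ≠ 0 := by positivity
    rw [Nat.factorial_succ n]
    push_cast
    field_simp
    ring
  rw [e3]
  norm_num [Nat.factorial]
  ring


private lemma BB_cont_s (h M c : ℝ) (n : ℕ) (d : ℝ) :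
    Continuous fun s => ∫ t in (0:ℝ)..d, BB h M c n s t := by
  simp_rw [BB_integral_t]
  exact ((continuous_finset_sum _ fun k _ => continuous_const.mul (continuous_pow k)).add
    (continuous_finset_sum _ fun k _ => continuous_const.mul (continuous_pow (k+1)))).add
    (continuous_const.mul (continuous_pow n))

theorem stmt_16 (b : ℝ) (hb : 0 < b) (h : ℂ) (q : ℝ → ℂ) (c : ℝ) (hc0 : 0 ≤ c)
    (hq : ContinuousOn q (Set.Icc (-b) b))
    (hqc : ∀ x ∈ Set.Icc (-b) b, ‖q x‖ ≤ c)
    (H G : ℝ → ℝ → ℂ)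
    (hHcont : ContinuousOn (fun p : ℝ × ℝ => H p.1 p.2) {p : ℝ × ℝ | |p.1| + |p.2| ≤ b})
    (hGcont : ContinuousOn (fun p : ℝ × ℝ => G p.1 p.2) {p : ℝ × ℝ | |p.1| + |p.2| ≤ b})
    (hsys1 : ∀ u v : ℝ, |u| + |v| ≤ b → H u v = h / 2 + ∫ u' in (0:ℝ)..u, G u' v)
    (hsys2 : ∀ u v : ℝ, |u| + |v| ≤ b →
        G u v = q u / 2 + ∫ v' in (0:ℝ)..v, q (u + v') * H u v')
    (hpde : ∀ u v : ℝ, |u| + |v| ≤ b →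
        deriv (fun v' => deriv (fun u' => H u' v') u) v = q (u + v) * H u v)
    (hbd1 : ∀ u : ℝ, |u| ≤ b → H u 0 = h / 2 + (1 / 2) * ∫ s in (0:ℝ)..u, q s)
    (hbd2 : ∀ v : ℝ, |v| ≤ b → H 0 v = h / 2) :
    ∀ u v : ℝ, |u| + |v| ≤ b →
      ‖H u v‖ ≤
        (‖h‖ / 2) * (∑' k : ℕ, c ^ k * |u * v| ^ k / ((k.factorial : ℝ)) ^ 2) +
        (1 / 2) * (∑' k : ℕ, c ^ (k + 1) * |u| ^ (k + 1) * |v| ^ k /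
          (((k + 1).factorial : ℝ) * (k.factorial : ℝ))) := by
  have hKclosed : IsClosed {p : ℝ × ℝ | |p.1| + |p.2| ≤ b} :=
    isClosed_le (continuous_fst.abs.add continuous_snd.abs) continuous_const
  have hKsub : {p : ℝ × ℝ | |p.1| + |p.2| ≤ b} ⊆ Set.Icc (-b) b ×ˢ Set.Icc (-b) b := by
    rintro ⟨x, y⟩ hp
    simp only [Set.mem_setOf_eq] at hp
    have hx1 := le_abs_self x; have hx2 := neg_abs_le x
    have hy1 := le_abs_self y; have hy2 := neg_abs_le y
    have hx0 := abs_nonneg x; have hy0 := abs_nonneg y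
    exact ⟨⟨by linarith, by linarith⟩, ⟨by linarith, by linarith⟩⟩
  have hKcomp : IsCompact {p : ℝ × ℝ | |p.1| + |p.2| ≤ b} :=
    (isCompact_Icc.prod isCompact_Icc).of_isClosed_subset hKclosed hKsub
  obtain ⟨M, hM⟩ := hKcomp.exists_bound_of_continuousOn hHcont
  have hM0 : 0 ≤ M := le_trans (norm_nonneg _) (hM (0, 0) (by simp [hb.le]))
  have hGseg : ∀ u v : ℝ, |u| + |v| ≤ b → IntervalIntegrable (fun u' => G u' v) volume 0 u := by
    intro u v huv
    apply ContinuousOn.intervalIntegrable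
    have maps : Set.MapsTo (fun u' : ℝ => (u', v)) (Set.uIcc 0 u)
        {p : ℝ × ℝ | |p.1| + |p.2| ≤ b} := by
      intro x hx
      have := abs_mem_le hx
      simp only [Set.mem_setOf_eq]
      linarith
    exact hGcont.comp ((continuous_id.prodMk continuous_const).continuousOn) maps
  have hqH : ∀ u' v : ℝ, |u'| + |v| ≤ b →
      IntervalIntegrable (fun v' => q (u' + v') * H u' v') volume 0 v := by
    intro u' v hu'v
    apply ContinuousOn.intervalIntegrable
    have maps1 : Set.MapsTo (fun v' : ℝ => u' + v') (Set.uIcc 0 v) (Set.Icc (-b) b) := by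
      intro x hx
      have h1 := abs_mem_le hx
      have h2 : |u' + x| ≤ b := (abs_add_le u' x).trans (by linarith)
      exact Set.mem_Icc.mpr (abs_le.mp h2)
    have maps2 : Set.MapsTo (fun v' : ℝ => (u', v')) (Set.uIcc 0 v)
        {p : ℝ × ℝ | |p.1| + |p.2| ≤ b} := by
      intro x hx
      have := abs_mem_le hx
      simp only [Set.mem_setOf_eq]
      linarith
    exact (hq.comp ((continuous_const.add continuous_id).continuousOn) maps1).mul
      (hHcont.comp ((continuous_const.prodMk continuous_id).continuousOn) maps2)
  have key : ∀ n (u v : ℝ), |u| + |v| ≤ b → ‖H u v‖ ≤ BB ‖h‖ M c n |u| |v| := by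
    intro n
    induction n with
    | zero =>
      intro u v huv
      simpa [BB] using hM (u, v) huv
    | succ n ih =>
      intro u v huv
      have hu : |u| ≤ b := by have := abs_nonneg v; linarith
      have hv : |v| ≤ b := by have := abs_nonneg u; linarith
      have hGbd : ∀ u' : ℝ, |u'| ≤ |u| →
          ‖G u' v‖ ≤ c / 2 + c * ∫ t in (0:ℝ)..|v|, BB ‖h‖ M c n |u'| t := by
        intro u' hu'
        have hu'0 := abs_nonneg u'
        have hu'v : |u'| + |v| ≤ b := by linarith
        rw [hsys2 u' v hu'v]
        refine (norm_add_le _ _).trans (add_le_add ?_ ?_)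
        · have hqb : ‖q u'‖ ≤ c := by
            exact hqc u' (Set.mem_Icc.mpr (abs_le.mp (hu'.trans hu)))
          have : ‖q u' / 2‖ = ‖q u'‖ / 2 := by rw [norm_div]; norm_num
          rw [this]; linarith
        · have hpt : ∀ w : ℝ, |w| ≤ |v| →
              ‖q (u' + w) * H u' w‖ ≤ c * BB ‖h‖ M c n |u'| |w| := by
            intro w hw
            have h1 : |u'| + |w| ≤ b := by linarith
            have h2 : |u' + w| ≤ b := (abs_add_le u' w).trans (by linarith)
            have hqb : ‖q (u' + w)‖ ≤ c := by
              exact hqc _ (Set.mem_Icc.mpr (abs_le.mp h2))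
            rw [norm_mul]
            exact mul_le_mul hqb (ih u' w h1) (norm_nonneg _) hc0
          have step : ‖∫ v' in (0:ℝ)..v, q (u' + v') * H u' v'‖ ≤
              ∫ t in (0:ℝ)..|v|, c * BB ‖h‖ M c n |u'| t := by
            refine norm_iint_le (hqH u' v hu'v)
              ((continuous_const.mul (BB_cont_t ‖h‖ M c n |u'|)).intervalIntegrable 0 |v|)
              fun t ht => ⟨?_, ?_⟩
            · have := hpt t (by rw [abs_of_nonneg ht.1]; exact ht.2)
              rwa [abs_of_nonneg ht.1] at this
            · have := hpt (-t) (by rw [abs_neg, abs_of_nonneg ht.1]; exact ht.2)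
              rwa [abs_neg, abs_of_nonneg ht.1] at this
          rw [← intervalIntegral.integral_const_mul]
          exact step
      rw [hsys1 u v huv]
      have hnorm2 : ‖h / 2‖ = ‖h‖ / 2 := by rw [norm_div]; norm_num
      calc ‖h / 2 + ∫ u' in (0:ℝ)..u, G u' v‖
          ≤ ‖h‖ / 2 + ‖∫ u' in (0:ℝ)..u, G u' v‖ := by
            refine (norm_add_le _ _).trans ?_
            rw [hnorm2]
        _ ≤ ‖h‖ / 2 + ∫ s in (0:ℝ)..|u|,
              (c / 2 + c * ∫ t in (0:ℝ)..|v|, BB ‖h‖ M c n s t) := by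
            refine add_le_add le_rfl ?_
            refine norm_iint_le (hGseg u v huv)
              ((continuous_const.add
                (continuous_const.mul (BB_cont_s ‖h‖ M c n |v|))).intervalIntegrable 0 |u|)
              fun s hs => ⟨?_, ?_⟩
            · have := hGbd s (by rw [abs_of_nonneg hs.1]; exact hs.2)
              rwa [abs_of_nonneg hs.1] at this
            · have := hGbd (-s) (by rw [abs_neg, abs_of_nonneg hs.1]; exact hs.2)
              rwa [abs_neg, abs_of_nonneg hs.1] at this
        _ = BB ‖h‖ M c (n + 1) |u| |v| := by
            erw [intervalIntegral.integral_add (intervalIntegrable_const)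
              ((continuous_const.mul (BB_cont_s ‖h‖ M c n |v|)).intervalIntegrable 0 |u|),
              intervalIntegral.integral_const, intervalIntegral.integral_const_mul,
              ← BB_rec ‖h‖ M c n |u| |v|]
            simp only [smul_eq_mul, sub_zero]
            ring
  intro u v huv
  have hkey : ∀ n, ‖H u v‖ ≤ BB ‖h‖ M c n |u| |v| := fun n => key n u v huv
  set r : ℝ := c * (|u| * |v|) with hr
  have hr0 : 0 ≤ r := mul_nonneg hc0 (by positivity)
  have hfact1 : ∀ k : ℕ, (1:ℝ) ≤ k.factorial := fun k => by exact_mod_cast k.factorial_pos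
  have hfactpos : ∀ k : ℕ, (0:ℝ) < k.factorial := fun k => by positivity
  have hS1 : Summable fun k : ℕ =>
      ‖h‖ / 2 * c ^ k * |u| ^ k / ((k.factorial : ℝ) * k.factorial) * |v| ^ k := by
    refine Summable.of_nonneg_of_le (fun k => ?_) (fun k => ?_)
      ((Real.summable_pow_div_factorial r).mul_left (‖h‖ / 2))
    · exact mul_nonneg (div_nonneg (mul_nonneg (mul_nonneg (by positivity)
        (pow_nonneg hc0 k)) (by positivity)) (by positivity)) (by positivity)
    · have hN : 0 ≤ ‖h‖ / 2 * r ^ k := mul_nonneg (by positivity) (pow_nonneg hr0 k)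
      have e : ‖h‖ / 2 * c ^ k * |u| ^ k / ((k.factorial : ℝ) * k.factorial) * |v| ^ k
          = (‖h‖ / 2 * r ^ k) / ((k.factorial : ℝ) * k.factorial) := by
        rw [hr, mul_pow, mul_pow]; ring
      rw [e, show ‖h‖ / 2 * (r ^ k / (k.factorial : ℝ)) = (‖h‖ / 2 * r ^ k) / (k.factorial : ℝ)
        from by ring, div_le_div_iff₀ (by positivity) (hfactpos k)]
      nlinarith [mul_nonneg hN (mul_nonneg (hfactpos k).le (sub_nonneg.mpr (hfact1 k)))]
  have hS2 : Summable fun k : ℕ =>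
      1 / 2 * c ^ (k + 1) * |u| ^ (k + 1) / (((k + 1).factorial : ℝ) * k.factorial) * |v| ^ k := by
    refine Summable.of_nonneg_of_le (fun k => ?_) (fun k => ?_)
      ((Real.summable_pow_div_factorial r).mul_left (1 / 2 * c * |u|))
    · exact mul_nonneg (div_nonneg (mul_nonneg (mul_nonneg (by positivity)
        (pow_nonneg hc0 _)) (by positivity)) (by positivity)) (by positivity)
    · have hN : 0 ≤ 1 / 2 * c * |u| * r ^ k :=
        mul_nonneg (mul_nonneg (mul_nonneg (by norm_num) hc0) (by positivity))
          (pow_nonneg hr0 k)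
      have e : 1 / 2 * c ^ (k + 1) * |u| ^ (k + 1) / (((k + 1).factorial : ℝ) * k.factorial)
            * |v| ^ k
          = (1 / 2 * c * |u| * r ^ k) / (((k + 1).factorial : ℝ) * k.factorial) := by
        rw [hr, mul_pow, mul_pow, pow_succ, pow_succ]; ring
      rw [e, show 1 / 2 * c * |u| * (r ^ k / (k.factorial : ℝ))
          = (1 / 2 * c * |u| * r ^ k) / (k.factorial : ℝ) from by ring,
        div_le_div_iff₀ (by positivity) (hfactpos k)]
      nlinarith [mul_nonneg hN (mul_nonneg (hfactpos k).le (sub_nonneg.mpr (hfact1 (k+1))))]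
  have hT : Tendsto (fun n : ℕ =>
      M * c ^ n * |u| ^ n / ((n.factorial : ℝ) * n.factorial) * |v| ^ n) atTop (𝓝 0) := by
    have htend : Tendsto (fun n : ℕ => M * (r ^ n / (n.factorial : ℝ))) atTop (𝓝 0) := by
      simpa using (Real.summable_pow_div_factorial r).tendsto_atTop_zero.const_mul M
    refine squeeze_zero (fun n => ?_) (fun n => ?_) htend
    · exact mul_nonneg (div_nonneg (mul_nonneg (mul_nonneg hM0 (pow_nonneg hc0 n))
        (by positivity)) (by positivity)) (by positivity)
    · have hN : 0 ≤ M * r ^ n := mul_nonneg hM0 (pow_nonneg hr0 n)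
      have e : M * c ^ n * |u| ^ n / ((n.factorial : ℝ) * n.factorial) * |v| ^ n
          = (M * r ^ n) / ((n.factorial : ℝ) * n.factorial) := by
        rw [hr, mul_pow, mul_pow]; ring
      rw [e, show M * (r ^ n / (n.factorial : ℝ)) = (M * r ^ n) / (n.factorial : ℝ) from by ring,
        div_le_div_iff₀ (by positivity) (hfactpos n)]
      nlinarith [mul_nonneg hN (mul_nonneg (hfactpos n).le (sub_nonneg.mpr (hfact1 n)))]
  have htot : Tendsto (fun n => BB ‖h‖ M c n |u| |v|) atTop
      (𝓝 ((∑' k : ℕ, ‖h‖ / 2 * c ^ k * |u| ^ k / ((k.factorial : ℝ) * k.factorial) * |v| ^ k)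
        + (∑' k : ℕ, 1 / 2 * c ^ (k + 1) * |u| ^ (k + 1) /
            (((k + 1).factorial : ℝ) * k.factorial) * |v| ^ k) + 0)) :=
    (hS1.hasSum.tendsto_sum_nat.add hS2.hasSum.tendsto_sum_nat).add hT
  have hlim : ‖H u v‖ ≤
      (∑' k : ℕ, ‖h‖ / 2 * c ^ k * |u| ^ k / ((k.factorial : ℝ) * k.factorial) * |v| ^ k)
      + (∑' k : ℕ, 1 / 2 * c ^ (k + 1) * |u| ^ (k + 1) /
          (((k + 1).factorial : ℝ) * k.factorial) * |v| ^ k) + 0 :=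
    ge_of_tendsto' htot hkey
  rw [add_zero] at hlim
  have e1 : (‖h‖ / 2) * (∑' k : ℕ, c ^ k * |u * v| ^ k / ((k.factorial : ℝ)) ^ 2)
      = ∑' k : ℕ, ‖h‖ / 2 * c ^ k * |u| ^ k / ((k.factorial : ℝ) * k.factorial) * |v| ^ k := by
    rw [← tsum_mul_left]
    exact tsum_congr fun k => by rw [abs_mul, mul_pow, sq]; ring
  have e2 : (1 / 2 : ℝ) * (∑' k : ℕ, c ^ (k + 1) * |u| ^ (k + 1) * |v| ^ k /
        (((k + 1).factorial : ℝ) * (k.factorial : ℝ)))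
      = ∑' k : ℕ, 1 / 2 * c ^ (k + 1) * |u| ^ (k + 1) /
          (((k + 1).factorial : ℝ) * k.factorial) * |v| ^ k := by
    rw [← tsum_mul_left]
    exact tsum_congr fun k => by ring
  rw [e1, e2]
  exact hlim
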